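/- For $n \ge 1$, let $F_n := \{(\tfrac{i}{n}, 0) : i \in \mathbb{Z}, -n \le i \le n\} \cup \{(\tfrac{1}{n}(1 + \tfrac{j}{2^n}), \tfrac{1}{n}(1 + \tfrac{j}{2^n})) : 0 \le j \le 2^n\}$, a set of $k_n = 2^n + 2n + 2$ distinct points in $\mathbb{R}^2$. Then the least squares slope $m_n$ of $F_n$ converges to $1$ as $n \to \infty$ (even though $F_n$ converges in the Hausdorff metric to the segment $[-1,1] \times \{0\}$, whose slope is $0$). -/

import Mathlib

open Filter Set

/-- The point set of Example 5.1: grid points `(i/n, 0)`, `-n ≤ i ≤ n`, together with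
the diagonal bump `((1/n)(1 + j/2ⁿ), (1/n)(1 + j/2ⁿ))`, `0 ≤ j ≤ 2ⁿ`. -/
noncomputable def exampleFn (n : ℕ) : Finset (ℝ × ℝ) :=
  (Finset.Icc (-(n : ℤ)) (n : ℤ)).image (fun i : ℤ => ((i : ℝ) / (n : ℝ), (0 : ℝ))) ∪
  (Finset.range (2 ^ n + 1)).image (fun j : ℕ =>
    ((1 / (n : ℝ)) * (1 + (j : ℝ) / 2 ^ n), (1 / (n : ℝ)) * (1 + (j : ℝ) / 2 ^ n)))

/-- The least squares slope through a finite set of points in `ℝ²`. -/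
noncomputable def lsSlope (A : Finset (ℝ × ℝ)) : ℝ :=
  (∑ p ∈ A, (p.2 - (∑ q ∈ A, q.2) / (A.card : ℝ)) *
      (p.1 - (∑ q ∈ A, q.1) / (A.card : ℝ))) /
  (∑ p ∈ A, (p.1 - (∑ q ∈ A, q.1) / (A.card : ℝ)) ^ 2)


lemma sumId (m : ℕ) : ∑ j ∈ Finset.range (m+1), (j:ℝ) = m*(m+1)/2 := by
  induction m with
  | zero => simp
  | succ k ih => rw [Finset.sum_range_succ, ih]; push_cast; ring

lemma sumSq (m : ℕ) : ∑ j ∈ Finset.range (m+1), (j:ℝ)^2 = m*(m+1)*(2*m+1)/6 := by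
  induction m with
  | zero => simp
  | succ k ih => rw [Finset.sum_range_succ, ih]; push_cast; ring

lemma iccEq (n : ℕ) : Finset.Icc (-(n:ℤ)) (n:ℤ)
    = (Finset.range (2*n+1)).image (fun j : ℕ => (j:ℤ) - n) := by
  ext i
  simp only [Finset.mem_Icc, Finset.mem_image, Finset.mem_range]
  constructor
  · intro h; exact ⟨(i + n).toNat, by omega, by omega⟩
  · rintro ⟨j, hj, rfl⟩; omega

lemma sumIcc1 (n : ℕ) : ∑ i ∈ Finset.Icc (-(n:ℤ)) (n:ℤ), ((i:ℝ)) = 0 := by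
  rw [iccEq, Finset.sum_image (by intro x _ y _ h; have h' : (x:ℤ) - n = (y:ℤ) - n := h; omega)]
  have h1 := sumId (2*n)
  simp only [Int.cast_sub, Int.cast_natCast, Finset.sum_sub_distrib, Finset.sum_const,
    Finset.card_range, nsmul_eq_mul] at *
  rw [h1]; push_cast; ring

lemma sumIcc2 (n : ℕ) : ∑ i ∈ Finset.Icc (-(n:ℤ)) (n:ℤ), ((i:ℝ))^2
    = n*(n+1)*(2*n+1)/3 := by
  rw [iccEq, Finset.sum_image (by intro x _ y _ h; have h' : (x:ℤ) - n = (y:ℤ) - n := h; omega)]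
  have h1 := sumId (2*n)
  have h2 := sumSq (2*n)
  have : ∀ j : ℕ, (((j:ℤ) - (n:ℤ) : ℤ) : ℝ)^2 = (j:ℝ)^2 - 2*(n:ℝ)*(j:ℝ) + (n:ℝ)^2 := by
    intro j; push_cast; ring
  simp_rw [this, Finset.sum_add_distrib, Finset.sum_sub_distrib, ← Finset.mul_sum,
    Finset.sum_const, Finset.card_range, nsmul_eq_mul, h1, h2]
  push_cast; ring

lemma diag_pos {n : ℕ} (hn : 1 ≤ n) (j : ℕ) :
    0 < (1 / (n : ℝ)) * (1 + (j : ℝ) / 2 ^ n) := by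
  have h1 : (0:ℝ) < n := by exact_mod_cast hn
  have h2 : (0:ℝ) ≤ (j:ℝ) / 2^n := by positivity
  positivity

lemma example_disjoint {n : ℕ} (hn : 1 ≤ n) :
    Disjoint ((Finset.Icc (-(n : ℤ)) (n : ℤ)).image
      (fun i : ℤ => ((i : ℝ) / (n : ℝ), (0 : ℝ))))
    ((Finset.range (2 ^ n + 1)).image (fun j : ℕ =>
      ((1 / (n : ℝ)) * (1 + (j : ℝ) / 2 ^ n), (1 / (n : ℝ)) * (1 + (j : ℝ) / 2 ^ n)))) := by
  rw [Finset.disjoint_left]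
  rintro p hp1 hp2
  simp only [Finset.mem_image] at hp1 hp2
  obtain ⟨i, _, rfl⟩ := hp1
  obtain ⟨j, _, hj⟩ := hp2
  have := diag_pos hn j
  have h2 : ((0:ℝ)) = (1 / (n : ℝ)) * (1 + (j : ℝ) / 2 ^ n) := congrArg Prod.snd hj.symm
  linarith [h2 ▸ this]

lemma example_sum {n : ℕ} (hn : 1 ≤ n) (f : ℝ × ℝ → ℝ) :
    ∑ p ∈ exampleFn n, f p
      = (∑ i ∈ Finset.Icc (-(n:ℤ)) (n:ℤ), f ((i:ℝ)/(n:ℝ), 0))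
      + ∑ j ∈ Finset.range (2^n+1),
          f ((1/(n:ℝ))*(1+(j:ℝ)/2^n), (1/(n:ℝ))*(1+(j:ℝ)/2^n)) := by
  have hn0 : (n:ℝ) ≠ 0 := by positivity
  rw [exampleFn, Finset.sum_union (example_disjoint hn)]
  rw [Finset.sum_image, Finset.sum_image]
  · intro x _ y _ h
    have hx : (1/(n:ℝ))*(1+(x:ℝ)/2^n) = (1/(n:ℝ))*(1+(y:ℝ)/2^n) := congrArg Prod.fst h
    have h2 : (0:ℝ) < 2^n := by positivity
    field_simp at hx
    exact_mod_cast add_left_cancel hx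
  · intro x _ y _ h
    have hx : (x:ℝ)/(n:ℝ) = (y:ℝ)/(n:ℝ) := congrArg Prod.fst h
    field_simp at hx
    exact_mod_cast hx

lemma example_card {n : ℕ} (hn : 1 ≤ n) : (exampleFn n).card = 2^n + 2*n + 2 := by
  have hn0 : (n:ℝ) ≠ 0 := by positivity
  rw [exampleFn, Finset.card_union_of_disjoint (example_disjoint hn),
    Finset.card_image_of_injOn, Finset.card_image_of_injOn]
  · rw [Finset.card_range, Int.card_Icc]
    omega
  · intro x _ y _ h
    have hx : (1/(n:ℝ))*(1+(x:ℝ)/2^n) = (1/(n:ℝ))*(1+(y:ℝ)/2^n) := congrArg Prod.fst h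
    have h2 : (0:ℝ) < 2^n := by positivity
    field_simp at hx
    exact_mod_cast add_left_cancel hx
  · intro x _ y _ h
    have hx : (x:ℝ)/(n:ℝ) = (y:ℝ)/(n:ℝ) := congrArg Prod.fst h
    field_simp at hx
    exact_mod_cast hx
lemma diagSum1 {n : ℕ} (hn : 1 ≤ n) :
    ∑ j ∈ Finset.range (2^n+1), (1/(n:ℝ))*(1+(j:ℝ)/2^n)
      = 3*((2:ℝ)^n+1)/(2*(n:ℝ)) := by
  have hn0 : (n:ℝ) ≠ 0 := by positivity
  have hN : (0:ℝ) < 2^n := by positivity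
  have h1 := sumId (2^n)
  push_cast at h1
  have hptw : ∀ j:ℕ, (1/(n:ℝ))*(1+(j:ℝ)/2^n)
      = 1/(n:ℝ) + (1/((n:ℝ)*2^n))*(j:ℝ) := by
    intro j; field_simp
  simp_rw [hptw, Finset.sum_add_distrib, ← Finset.mul_sum, Finset.sum_const,
    Finset.card_range, nsmul_eq_mul, h1]
  push_cast
  field_simp
  ring

lemma diagSum2 {n : ℕ} (hn : 1 ≤ n) :
    ∑ j ∈ Finset.range (2^n+1), ((1/(n:ℝ))*(1+(j:ℝ)/2^n))^2
      = 2*((2:ℝ)^n+1)/(n:ℝ)^2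
        + ((2:ℝ)^n+1)*(2*(2:ℝ)^n+1)/(6*(2:ℝ)^n*(n:ℝ)^2) := by
  have hn0 : (n:ℝ) ≠ 0 := by positivity
  have hN : (0:ℝ) < 2^n := by positivity
  have h1 := sumId (2^n)
  have h2 := sumSq (2^n)
  push_cast at h1 h2
  have hptw : ∀ j:ℕ, ((1/(n:ℝ))*(1+(j:ℝ)/2^n))^2
      = 1/(n:ℝ)^2 + (2/((n:ℝ)^2*2^n))*(j:ℝ)
        + (1/((n:ℝ)^2*((2:ℝ)^n)^2))*(j:ℝ)^2 := by
    intro j; field_simp; ring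
  simp_rw [hptw, Finset.sum_add_distrib, ← Finset.mul_sum, Finset.sum_const,
    Finset.card_range, nsmul_eq_mul, h1, h2]
  push_cast
  field_simp
  ring

lemma sum_expand1 (A : Finset (ℝ×ℝ)) (c d : ℝ) :
    ∑ p ∈ A, (p.2 - d)*(p.1 - c)
      = (∑ p ∈ A, p.2*p.1) - d*(∑ p ∈ A, p.1) - c*(∑ p ∈ A, p.2)
        + (A.card:ℝ)*(d*c) := by
  have hptw : ∀ p : ℝ×ℝ, (p.2 - d)*(p.1 - c)
      = p.2*p.1 - d*p.1 - c*p.2 + d*c := by intro p; ring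
  simp_rw [hptw, Finset.sum_add_distrib, Finset.sum_sub_distrib, ← Finset.mul_sum,
    Finset.sum_const, nsmul_eq_mul]
  ring

lemma sum_expand2 (A : Finset (ℝ×ℝ)) (c : ℝ) :
    ∑ p ∈ A, (p.1 - c)^2
      = (∑ p ∈ A, p.1^2) - 2*c*(∑ p ∈ A, p.1) + (A.card:ℝ)*c^2 := by
  have hptw : ∀ p : ℝ×ℝ, (p.1 - c)^2 = p.1^2 - 2*c*p.1 + c^2 := by intro p; ring
  simp_rw [hptw, Finset.sum_add_distrib, Finset.sum_sub_distrib, ← Finset.mul_sum,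
    Finset.sum_const, nsmul_eq_mul]

noncomputable def NN (n : ℕ) : ℝ := 2^n
noncomputable def SS (n : ℕ) : ℝ := 3*(NN n+1)/(2*(n:ℝ))
noncomputable def TT (n : ℕ) : ℝ :=
  2*(NN n+1)/(n:ℝ)^2 + (NN n+1)*(2*NN n+1)/(6*NN n*(n:ℝ)^2)
noncomputable def BB (n : ℕ) : ℝ := ((n:ℝ)+1)*(2*(n:ℝ)+1)/(3*(n:ℝ))
noncomputable def kk (n : ℕ) : ℝ := NN n + 2*(n:ℝ) + 2

lemma rawX {n : ℕ} (hn : 1 ≤ n) : ∑ p ∈ exampleFn n, p.1 = SS n := by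
  rw [example_sum hn (fun p => p.1)]
  simp only []
  rw [← Finset.sum_div, sumIcc1, zero_div, zero_add, diagSum1 hn, SS, NN]

lemma rawY {n : ℕ} (hn : 1 ≤ n) : ∑ p ∈ exampleFn n, p.2 = SS n := by
  rw [example_sum hn (fun p => p.2)]
  simp only [Finset.sum_const_zero, zero_add]
  rw [diagSum1 hn, SS, NN]

lemma rawXY {n : ℕ} (hn : 1 ≤ n) : ∑ p ∈ exampleFn n, p.2*p.1 = TT n := by
  rw [example_sum hn (fun p => p.2*p.1)]
  simp only [zero_mul, Finset.sum_const_zero, zero_add]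
  have : ∀ j : ℕ, (1/(n:ℝ))*(1+(j:ℝ)/2^n) * ((1/(n:ℝ))*(1+(j:ℝ)/2^n))
      = ((1/(n:ℝ))*(1+(j:ℝ)/2^n))^2 := by intro j; ring
  simp_rw [this]
  rw [diagSum2 hn, TT, NN]

lemma rawXX {n : ℕ} (hn : 1 ≤ n) : ∑ p ∈ exampleFn n, p.1^2 = BB n + TT n := by
  have hn0 : (n:ℝ) ≠ 0 := by positivity
  rw [example_sum hn (fun p => p.1^2)]
  simp only [div_pow]
  rw [← Finset.sum_div, sumIcc2, diagSum2 hn, TT, NN, BB]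
  field_simp

lemma slope_formula {n : ℕ} (hn : 1 ≤ n) :
    lsSlope (exampleFn n) =
      (TT n - (SS n)^2 / kk n) / (BB n + (TT n - (SS n)^2 / kk n)) := by
  have hn0 : (n:ℝ) ≠ 0 := by positivity
  have hk : ((exampleFn n).card : ℝ) = kk n := by
    rw [example_card hn]; push_cast [kk, NN]; ring
  have hkpos : (0:ℝ) < kk n := by
    rw [kk, NN]; positivity
  have hkne : kk n ≠ 0 := ne_of_gt hkpos
  rw [lsSlope, sum_expand1, sum_expand2, hk, rawX hn, rawY hn, rawXY hn, rawXX hn]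
  congr 1
  · field_simp; ring
  · field_simp; ring

lemma bounds_core {n : ℕ} (hn : 1 ≤ n) :
    ∀ A B : ℝ, A = 2*((2:ℝ)^n+1)/(n:ℝ)^2 + ((2:ℝ)^n+1)*(2*(2:ℝ)^n+1)/(6*(2:ℝ)^n*(n:ℝ)^2)
        - (3*((2:ℝ)^n+1)/(2*(n:ℝ)))^2 / ((2:ℝ)^n + 2*(n:ℝ) + 2) →
      B = ((n:ℝ)+1)*(2*(n:ℝ)+1)/(3*(n:ℝ)) →
      1 - 24*(n:ℝ)^3/2^n ≤ A/(A+B) ∧ A/(A+B) ≤ 1 := by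
  intro A B hAdef hBdef
  set N : ℝ := (2:ℝ)^n with hNdef
  set nn : ℝ := (n:ℝ) with hnndef
  have hnn1 : (1:ℝ) ≤ nn := by rw [hnndef]; exact_mod_cast hn
  have hnnpos : (0:ℝ) < nn := by linarith
  have hNpos : (0:ℝ) < N := by positivity
  have hkpos : (0:ℝ) < N + 2*nn + 2 := by positivity
  -- key identity
  have hid : A - (N+1)/(12*nn^2)
      = (N+1)/nn^2 * (1/(6*N) + 9*(2*nn+1)/(4*(N + 2*nn + 2))) := by
    rw [hAdef]; field_simp; ring
  have hpos1 : 0 < (N+1)/nn^2 * (1/(6*N) + 9*(2*nn+1)/(4*(N + 2*nn + 2))) := by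
    have h1 : 0 < (N+1)/nn^2 := by positivity
    have h2 : 0 < 1/(6*N) := by positivity
    have h3 : 0 < 9*(2*nn+1)/(4*(N + 2*nn + 2)) := by positivity
    nlinarith
  have hA : (N+1)/(12*nn^2) ≤ A := by linarith
  have hApos : 0 < A := lt_of_lt_of_le (by positivity) hA
  have hBpos : 0 < B := by rw [hBdef]; positivity
  have hABpos : 0 < A + B := by linarith
  constructor
  · -- lower bound
    have hA' : N + 1 ≤ A*(12*nn^2) := (div_le_iff₀ (by positivity)).mp hA
    have hB2 : B ≤ 2*nn := by
      rw [hBdef, div_le_iff₀ (by positivity)]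
      nlinarith
    have hBA : B/A ≤ 24*nn^3/N := by
      rw [div_le_div_iff₀ hApos hNpos]
      nlinarith [mul_le_mul_of_nonneg_left hA' (by positivity : (0:ℝ) ≤ 2*nn),
        mul_le_mul_of_nonneg_right hB2 hNpos.le]
    have e1 : 1 - A/(A+B) = B/(A+B) := by field_simp; ring
    have e2 : B/(A+B) ≤ B/A :=
      div_le_div_of_nonneg_left hBpos.le hApos (by linarith)
    have : 1 - 24*nn^3/N ≤ A/(A+B) := by linarith
    simpa [hNdef, mul_div_assoc] using this
  · rw [div_le_one hABpos]; linarith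

/-- The sets `exampleFn n` consist of `2ⁿ + 2n + 2` distinct points,
and their least squares slope converges to `1` as `n → ∞` (even though the sets
converge in the Hausdorff metric to the horizontal segment `[-1,1] × {0}`, of
slope `0`). -/
theorem example_lsSlope_tendsto_one :
    (∀ n : ℕ, 1 ≤ n → (exampleFn n).card = 2 ^ n + 2 * n + 2) ∧
    Tendsto (fun n => lsSlope (exampleFn n)) atTop (nhds 1) := by
  constructor
  · intro n hn; exact example_card hn
  · have h0 : Tendsto (fun n : ℕ => (n:ℝ)^3/2^n) atTop (nhds 0) :=
      tendsto_pow_const_div_const_pow_of_one_lt 3 one_lt_two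
    have hlow : Tendsto (fun n : ℕ => 1 - 24*(n:ℝ)^3/2^n) atTop (nhds 1) := by
      have h1 := h0.const_mul (24:ℝ)
      have h2 : Tendsto (fun n : ℕ => 1 - 24*((n:ℝ)^3/2^n)) atTop (nhds (1 - 24*0)) :=
        tendsto_const_nhds.sub h1
      simpa [mul_div_assoc] using h2
    refine tendsto_of_tendsto_of_tendsto_of_le_of_le' hlow tendsto_const_nhds ?_ ?_
    · filter_upwards [eventually_ge_atTop 1] with n hn
      have hb := bounds_core hn (TT n - (SS n)^2 / kk n) (BB n)
        (by simp only [TT, SS, kk, NN]) (by simp only [BB])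
      rw [slope_formula hn, add_comm (BB n)]
      exact hb.1
    · filter_upwards [eventually_ge_atTop 1] with n hn
      have hb := bounds_core hn (TT n - (SS n)^2 / kk n) (BB n)
        (by simp only [TT, SS, kk, NN]) (by simp only [BB])
      rw [slope_formula hn, add_comm (BB n)]
      exact hb.2
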